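/- Let G be a graph and S⊆V(G) a set satisfying (H1) and (H2). Let F ∈ cmd_3(G−S) and s∈S. If N(s) intersects more than one class of F, then either N(s)∩F = F∖C for a single class C of F, or N(s)∩F = F. -/

import Mathlib

namespace PrisonFreePaper

variable {V : Type*}

/-- The prison graph on 5 vertices: `K₅` minus the two edges `{4,2}` and `{4,3}`
(which share the vertex `4`).  Thus `{0,1,2,3}` is a 4-clique and the vertex `4`
is adjacent exactly to `0` and `1`. -/
def prison : SimpleGraph (Fin 5) where
  Adj a b := a ≠ b ∧ ¬((a = 4 ∧ (b = 2 ∨ b = 3)) ∨ (b = 4 ∧ (a = 2 ∨ a = 3)))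
  symm := by
    constructor
    rintro a b ⟨h1, h2⟩
    exact ⟨h1.symm, by tauto⟩
  loopless := by
    constructor
    rintro a ⟨h, _⟩
    exact h rfl

/-- `P` is a 5-vertex set inducing a subgraph of `G` isomorphic to the prison. -/
def InducesPrison (G : SimpleGraph V) (P : Set V) : Prop :=
  ∃ f : Fin 5 ↪ V, Set.range f = P ∧ ∀ a b, G.Adj (f a) (f b) ↔ prison.Adj a b

/-- `G` is prison-free: no 5-vertex set induces a prison. -/
def PrisonFree (G : SimpleGraph V) : Prop :=
  ¬ ∃ P : Set V, InducesPrison G P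

/-- `P` is the set of classes witnessing that the induced subgraph `G[F]` is
complete multipartite: the classes are nonempty, pairwise disjoint, their union
is `F`, and two vertices of `F` are adjacent iff they lie in different classes. -/
def IsCMP (G : SimpleGraph V) (F : Set V) (P : Set (Set V)) : Prop :=
  (∀ C ∈ P, C.Nonempty ∧ C ⊆ F) ∧
  (⋃₀ P = F) ∧
  (∀ C ∈ P, ∀ D ∈ P, C ≠ D → Disjoint C D) ∧
  (∀ u ∈ F, ∀ v ∈ F, (G.Adj u v ↔ ¬ ∃ C ∈ P, u ∈ C ∧ v ∈ C))

/-- The induced subgraph `G[F]` is complete multipartite. -/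
def CMP (G : SimpleGraph V) (F : Set V) : Prop := ∃ P, IsCMP G F P

/-- The induced subgraph `G[F]` is complete multipartite with at least `p` classes. -/
def CMPAtLeast (G : SimpleGraph V) (F : Set V) (p : ℕ) : Prop :=
  ∃ P, IsCMP G F P ∧ ∃ f : Fin p ↪ Set V, ∀ i, f i ∈ P

/-- `F ∈ cmd_p` of the induced subgraph of `G` on the ground set `W`:
`F` is an inclusion-wise maximal subset of `W` inducing a complete multipartite
graph with at least `p` classes. -/
def Cmd (G : SimpleGraph V) (W : Set V) (p : ℕ) (F : Set V) : Prop :=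
  F ⊆ W ∧ CMPAtLeast G F p ∧
    ∀ F', F' ⊆ W → F ⊆ F' → CMPAtLeast G F' p → F' = F

/-- The neighbourhood of `v` in `G` intersects at most one class of `P`. -/
def MeetsAtMostOneClass (G : SimpleGraph V) (P : Set (Set V)) (v : V) : Prop :=
  ∀ C ∈ P, ∀ D ∈ P, (∃ x ∈ C, G.Adj v x) → (∃ y ∈ D, G.Adj v y) → C = D

/-- The induced subgraph `G[X]`, viewed as a graph on the same vertex set
(only edges with both endpoints in `X` are kept). -/
def inducedOn (G : SimpleGraph V) (X : Set V) : SimpleGraph V where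
  Adj a b := G.Adj a b ∧ a ∈ X ∧ b ∈ X
  symm := by constructor; rintro a b ⟨h, ha, hb⟩; exact ⟨h.symm, hb, ha⟩
  loopless := by constructor; rintro a ⟨h, _⟩; exact (G.ne_of_adj h) rfl

/-- The set of edges of `G` with both endpoints in `X`, i.e. the edges of `G[X]`. -/
def edgesWithin (G : SimpleGraph V) (X : Set V) : Set (Sym2 V) :=
  (inducedOn G X).edgeSet

/-- `(G,k)` is a yes-instance of Prison-Free Edge Deletion. -/
def DeletionYes (G : SimpleGraph V) (k : ℕ) : Prop :=
  ∃ A : Set (Sym2 V), A ⊆ G.edgeSet ∧ A.Finite ∧ A.ncard ≤ k ∧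
    PrisonFree (G.deleteEdges A)

/-- `P` is a strict supergraph of a prison in `G`: a 5-vertex set whose induced
subgraph is `K₅` or `K₅` minus one edge (at most one non-adjacent pair). -/
def StrictSupPrison (G : SimpleGraph V) (P : Set V) : Prop :=
  P.ncard = 5 ∧ ∃ u v : V, ∀ x ∈ P, ∀ y ∈ P, x ≠ y → ¬ G.Adj x y →
    (x = u ∧ y = v) ∨ (x = v ∧ y = u)

/-- `P` is a supergraph of a prison in `G`: a 5-vertex set whose induced subgraph
contains a prison on `P` as a spanning subgraph, i.e. all non-adjacent pairs in `P`
are among two pairs sharing a common vertex. -/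
def SupPrison (G : SimpleGraph V) (P : Set V) : Prop :=
  P.ncard = 5 ∧ ∃ w u v : V, ∀ x ∈ P, ∀ y ∈ P, x ≠ y → ¬ G.Adj x y →
    (({x, y} : Set V) = {w, u} ∨ ({x, y} : Set V) = {w, v})

/-- Hypothesis (H1): every edge of `G` that does not have both endpoints in `S`
is contained in a strict supergraph of a prison in `G`. -/
def H1 (G : SimpleGraph V) (S : Set V) : Prop :=
  ∀ u v : V, G.Adj u v → ¬(u ∈ S ∧ v ∈ S) →
    ∃ P, StrictSupPrison G P ∧ u ∈ P ∧ v ∈ P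

/-- Hypothesis (H2): every 5-vertex set inducing a prison in `G` contains at least
two edges with both endpoints in `S`. -/
def H2 (G : SimpleGraph V) (S : Set V) : Prop :=
  ∀ P, InducesPrison G P →
    ∃ e₁ e₂ : Sym2 V, e₁ ≠ e₂ ∧ e₁ ∈ edgesWithin G (P ∩ S) ∧ e₂ ∈ edgesWithin G (P ∩ S)

/-- `B`: the edges of `G−S` lying in no triangle of `G−S`. -/
def BSet (G : SimpleGraph V) (S : Set V) : Set (Sym2 V) :=
  {e ∈ edgesWithin G Sᶜ | ¬ ∃ w ∈ Sᶜ, ∀ x ∈ e, G.Adj w x}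

/-- `B_e` for the edge `e = ab` of `G[S]`: the edges of `B` both of whose endpoints
are adjacent in `G` to both `a` and `b`. -/
def BOf (G : SimpleGraph V) (S : Set V) (a b : V) : Set (Sym2 V) :=
  {f ∈ BSet G S | ∀ x ∈ f, G.Adj x a ∧ G.Adj x b}

/-- `V(B_e)`: the set of endpoints of the edges of `B_e`. -/
def BVerts (G : SimpleGraph V) (S : Set V) (a b : V) : Set V :=
  {x | ∃ f ∈ BOf G S a b, x ∈ f}

/-- The graph `G ∪ A` obtained by adding the pairs in `A` as edges. -/
def addEdges (G : SimpleGraph V) (A : Set (Sym2 V)) : SimpleGraph V :=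
  G ⊔ SimpleGraph.fromEdgeSet A

/-- `A` is a prison-free completion set for `G`: a set of non-edges (unordered
pairs of distinct vertices not adjacent in `G`) whose addition makes `G` prison-free. -/
def CompletionSet (G : SimpleGraph V) (A : Set (Sym2 V)) : Prop :=
  (∀ e ∈ A, ¬ e.IsDiag) ∧ (∀ e ∈ A, e ∉ G.edgeSet) ∧ PrisonFree (addEdges G A)

/-- `A` is a minimal prison-free completion set for `G`. -/
def MinCompletionSet (G : SimpleGraph V) (A : Set (Sym2 V)) : Prop :=
  CompletionSet G A ∧ ∀ A' ⊂ A, ¬ CompletionSet G A'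

/-- `A` is a solution to the instance `(G,k)` of Prison-Free Edge Completion:
a prison-free completion set of size at most `k`. -/
def Solution (G : SimpleGraph V) (k : ℕ) (A : Set (Sym2 V)) : Prop :=
  CompletionSet G A ∧ A.Finite ∧ A.ncard ≤ k

/-- `A` is a minimal solution to `(G,k)`: a solution no proper subset of which is a
prison-free completion set. -/
def MinSolution (G : SimpleGraph V) (k : ℕ) (A : Set (Sym2 V)) : Prop :=
  Solution G k A ∧ ∀ A' ⊂ A, ¬ CompletionSet G A'

/-- `K` is a set of 4 vertices inducing a complete graph `K₄` in `G`. -/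
def IsK4 (G : SimpleGraph V) (K : Set V) : Prop :=
  K.ncard = 4 ∧ ∀ u ∈ K, ∀ v ∈ K, u ≠ v → G.Adj u v

/-- The modulator property of the set `S` (output of the sunflower-based
Lemma): for every prison `P` in `G` and every edge set `A ⊆ E(G)` with `|A| ≤ k`,
if deleting `A` from `G[S]` yields a prison-free graph then `A` contains an edge
of `G[P]`. -/
def GoodModulator (G : SimpleGraph V) (k : ℕ) (S : Set V) : Prop :=
  ∀ P : Set V, InducesPrison G P →
    ∀ A : Set (Sym2 V), A ⊆ G.edgeSet → A.Finite → A.ncard ≤ k →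
      PrisonFree ((inducedOn G S).deleteEdges A) →
      ∃ e ∈ A, e ∈ edgesWithin G P

/-- Hypothesis (H3): for every `F' ∈ cmd₃(G−S)` and every inclusion-wise maximal
set `F ⊇ F'` such that `G[F]` is complete multipartite, some vertex outside `F`
has neighbours in at least two classes of `F`. -/
def H3 (G : SimpleGraph V) (S : Set V) : Prop :=
  ∀ F', Cmd G Sᶜ 3 F' → ∀ F : Set V, F' ⊆ F → CMP G F →
    (∀ F'', F ⊆ F'' → CMP G F'' → F'' = F) →
    ∃ v ∉ F, ∃ P, IsCMP G F P ∧
      ∃ C ∈ P, ∃ D ∈ P, C ≠ D ∧ (∃ x ∈ C, G.Adj v x) ∧ ∃ y ∈ D, G.Adj v y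

/-- `F` is an inclusion-wise maximal subset of `W` inducing a complete
multipartite subgraph of `G`. -/
def MaxCMPon (G : SimpleGraph V) (W F : Set V) : Prop :=
  F ⊆ W ∧ CMP G F ∧ ∀ F'', F'' ⊆ W → F ⊆ F'' → CMP G F'' → F'' = F



section Helpers
variable {V : Type*} {G : SimpleGraph V} {S : Set V}

lemma prison_adj_iff (a b : Fin 5) :
    prison.Adj a b ↔ (a ≠ b ∧ ¬((a = 4 ∧ (b = 2 ∨ b = 3)) ∨ (b = 4 ∧ (a = 2 ∨ a = 3)))) :=
  Iff.rfl

instance : DecidableRel prison.Adj := fun a b => decidable_of_iff' _ (prison_adj_iff a b)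

lemma edge_eq_of_subset_pair {X : Set V} {a b : V} {e : Sym2 V}
    (he : e ∈ edgesWithin G X) (hX : X ⊆ {a, b}) : e = s(a, b) := by
  induction e with
  | h u v =>
    rw [edgesWithin, SimpleGraph.mem_edgeSet] at he
    obtain ⟨hadj, hu, hv⟩ := he
    have hne : u ≠ v := hadj.ne
    have hu' : u = a ∨ u = b := by simpa using hX hu
    have hv' : v = a ∨ v = b := by simpa using hX hv
    rcases hu' with rfl | rfl <;> rcases hv' with rfl | rfl
    · exact absurd rfl hne
    · rfl
    · exact Sym2.eq_swap
    · exact absurd rfl hne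

lemma no_small_prison (h2 : H2 G S) {P : Set V} (hP : InducesPrison G P)
    {a b : V} (hab : P ∩ S ⊆ {a, b}) : False := by
  obtain ⟨e₁, e₂, hne, he₁, he₂⟩ := h2 P hP
  exact hne ((edge_eq_of_subset_pair he₁ hab).trans (edge_eq_of_subset_pair he₂ hab).symm)

lemma induces_prison_of {v0 v1 v2 v3 v4 : V}
    (a01 : G.Adj v0 v1) (a02 : G.Adj v0 v2) (a03 : G.Adj v0 v3)
    (a12 : G.Adj v1 v2) (a13 : G.Adj v1 v3) (a23 : G.Adj v2 v3)
    (a40 : G.Adj v4 v0) (a41 : G.Adj v4 v1)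
    (n42 : ¬G.Adj v4 v2) (n43 : ¬G.Adj v4 v3)
    (d42 : v4 ≠ v2) (d43 : v4 ≠ v3) :
    InducesPrison G ({v0, v1, v2, v3, v4} : Set V) := by
  have d01 := a01.ne; have d02 := a02.ne; have d03 := a03.ne
  have d12 := a12.ne; have d13 := a13.ne; have d23 := a23.ne
  have d40 := a40.ne; have d41 := a41.ne
  have a10 := a01.symm; have a20 := a02.symm; have a30 := a03.symm
  have a21 := a12.symm; have a31 := a13.symm; have a32 := a23.symm
  have a04 := a40.symm; have a14 := a41.symm
  have n24 : ¬G.Adj v2 v4 := fun h => n42 h.symm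
  have n34 : ¬G.Adj v3 v4 := fun h => n43 h.symm
  have i0 : ¬G.Adj v0 v0 := G.irrefl
  have i1 : ¬G.Adj v1 v1 := G.irrefl
  have i2 : ¬G.Adj v2 v2 := G.irrefl
  have i3 : ¬G.Adj v3 v3 := G.irrefl
  have i4 : ¬G.Adj v4 v4 := G.irrefl
  refine ⟨⟨![v0, v1, v2, v3, v4], ?_⟩, ?_, ?_⟩
  · intro i j hij
    fin_cases i <;> fin_cases j <;> simp_all
  · ext w
    constructor
    · rintro ⟨i, rfl⟩
      fin_cases i <;> simp <;>
        first
          | exact Or.inl rfl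
          | exact Or.inr (Or.inl rfl)
          | exact Or.inr (Or.inr (Or.inl rfl))
          | exact Or.inr (Or.inr (Or.inr (Or.inl rfl)))
          | exact Or.inr (Or.inr (Or.inr (Or.inr rfl)))
    · intro hw
      rcases hw with rfl | rfl | rfl | rfl | rfl
      · exact ⟨0, rfl⟩
      · exact ⟨1, rfl⟩
      · exact ⟨2, rfl⟩
      · exact ⟨3, rfl⟩
      · exact ⟨4, rfl⟩
  · intro a b
    fin_cases a <;> fin_cases b <;>
      simp only [Function.Embedding.coeFn_mk, Matrix.cons_val_zero, Matrix.cons_val_one,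
        Matrix.head_cons, Matrix.cons_val_two, Matrix.tail_cons, Matrix.cons_val_three,
        Matrix.cons_val_four, Fin.isValue] <;>
      first
        | (refine iff_of_true ?_ (by decide); assumption)
        | (refine iff_of_false ?_ (by decide); assumption)


lemma prison_contra (h2 : H2 G S) {v0 v1 v2 v3 v4 : V}
    (a01 : G.Adj v0 v1) (a02 : G.Adj v0 v2) (a03 : G.Adj v0 v3)
    (a12 : G.Adj v1 v2) (a13 : G.Adj v1 v3) (a23 : G.Adj v2 v3)
    (a40 : G.Adj v4 v0) (a41 : G.Adj v4 v1)
    (n42 : ¬G.Adj v4 v2) (n43 : ¬G.Adj v4 v3)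
    (d42 : v4 ≠ v2) (d43 : v4 ≠ v3)
    {a b : V}
    (h0 : v0 ∈ S → v0 = a ∨ v0 = b) (h1 : v1 ∈ S → v1 = a ∨ v1 = b)
    (h2' : v2 ∈ S → v2 = a ∨ v2 = b) (h3 : v3 ∈ S → v3 = a ∨ v3 = b)
    (h4 : v4 ∈ S → v4 = a ∨ v4 = b) : False := by
  refine no_small_prison h2
    (induces_prison_of a01 a02 a03 a12 a13 a23 a40 a41 n42 n43 d42 d43) (a := a) (b := b) ?_
  rintro w ⟨hw, hwS⟩
  have : w = a ∨ w = b := by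
    rcases hw with rfl | rfl | rfl | rfl | rfl
    · exact h0 hwS
    · exact h1 hwS
    · exact h2' hwS
    · exact h3 hwS
    · exact h4 hwS
  simpa using this

lemma exists_good_pair [Fintype V] {Q : Set V} {x y : V}
    (hQ : StrictSupPrison G Q) (hx : x ∈ Q) (hy : y ∈ Q) (hxy : x ≠ y) :
    ∃ a b, a ∈ Q ∧ b ∈ Q ∧ a ≠ b ∧ a ≠ x ∧ a ≠ y ∧ b ≠ x ∧ b ≠ y ∧
      G.Adj a b ∧ G.Adj a x ∧ G.Adj a y ∧ G.Adj b x ∧ G.Adj b y := by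
  classical
  obtain ⟨hcard, u, v, huv⟩ := hQ
  have key : ∀ p q p' q' : V, p ∈ Q → q ∈ Q → p' ∈ Q → q' ∈ Q → p ≠ q → p' ≠ q' →
      ¬G.Adj p q → ((p = p' ∧ q = q') ∨ (p = q' ∧ q = p') ∨ G.Adj p' q') := by
    intro p q p' q' hp hq hp' hq' hne hne' hnadj
    by_cases had : G.Adj p' q'
    · exact Or.inr (Or.inr had)
    · rcases huv p hp q hq hne hnadj with ⟨rfl, rfl⟩ | ⟨rfl, rfl⟩ <;>
        rcases huv p' hp' q' hq' hne' had with ⟨rfl, rfl⟩ | ⟨rfl, rfl⟩ <;> tauto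
  have hsub : ({x, y} : Set V) ⊆ Q := by
    rintro w (rfl | rfl)
    · exact hx
    · simp_all
  have h3 : (Q \ {x, y}).ncard = 3 := by
    rw [Set.ncard_diff hsub (Set.toFinite _), hcard, Set.ncard_pair hxy]
  rw [Set.ncard_eq_three] at h3
  obtain ⟨c1, c2, c3, h12, h13, h23, hset⟩ := h3
  have m1 : c1 ∈ Q \ {x, y} := hset ▸ (by simp)
  have m2 : c2 ∈ Q \ {x, y} := hset ▸ (by simp)
  have m3 : c3 ∈ Q \ {x, y} := hset ▸ (by simp)
  obtain ⟨q1, e1⟩ := m1; obtain ⟨q2, e2⟩ := m2; obtain ⟨q3, e3⟩ := m3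
  have e1x : c1 ≠ x := fun h => e1 (by simp [h])
  have e1y : c1 ≠ y := fun h => e1 (by simp [h])
  have e2x : c2 ≠ x := fun h => e2 (by simp [h])
  have e2y : c2 ≠ y := fun h => e2 (by simp [h])
  have e3x : c3 ≠ x := fun h => e3 (by simp [h])
  have e3y : c3 ≠ y := fun h => e3 (by simp [h])
  -- helper to upgrade: if some pair is nonadjacent, force adjacency elsewhere
  by_cases g12 : G.Adj c1 c2
  · by_cases g13 : G.Adj c1 c3
    · by_cases g23 : G.Adj c2 c3
      · by_cases a1x : G.Adj c1 x
        · by_cases a1y : G.Adj c1 y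
          · by_cases a2x : G.Adj c2 x
            · by_cases a2y : G.Adj c2 y
              · exact ⟨c1, c2, q1, q2, h12, e1x, e1y, e2x, e2y, g12, a1x, a1y, a2x, a2y⟩
              · -- c2-y bad; c3 must be fully good
                have a3x : G.Adj c3 x := by
                  rcases key c2 y c3 x q2 hy q3 hx e2y e3x a2y with ⟨h, h'⟩ | ⟨h, h'⟩ | h <;>
                    first | exact h | exact absurd h (by assumption) | exact absurd h' (by tauto)
                have a3y : G.Adj c3 y := by
                  rcases key c2 y c3 y q2 hy q3 hy e2y e3y a2y with ⟨h, h'⟩ | ⟨h, h'⟩ | h <;>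
                    first | exact h | exact absurd h (by assumption) | exact absurd h' (by tauto)
                exact ⟨c1, c3, q1, q3, h13, e1x, e1y, e3x, e3y, g13, a1x, a1y, a3x, a3y⟩
            · -- c2-x bad; c3 good
              have a3x : G.Adj c3 x := by
                rcases key c2 x c3 x q2 hx q3 hx e2x e3x a2x with ⟨h, h'⟩ | ⟨h, h'⟩ | h <;>
                  first | exact h | exact absurd h (by assumption) | exact absurd h' (by tauto)
              have a3y : G.Adj c3 y := by
                rcases key c2 x c3 y q2 hx q3 hy e2x e3y a2x with ⟨h, h'⟩ | ⟨h, h'⟩ | h <;>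
                  first | exact h | exact absurd h (by assumption) | exact absurd h' (by tauto) | exact absurd h'.symm (by tauto)
              exact ⟨c1, c3, q1, q3, h13, e1x, e1y, e3x, e3y, g13, a1x, a1y, a3x, a3y⟩
          · -- c1-y bad; use (c2,c3)
            have a2x : G.Adj c2 x := by
              rcases key c1 y c2 x q1 hy q2 hx e1y e2x a1y with ⟨h, h'⟩ | ⟨h, h'⟩ | h <;>
                first | exact h | exact absurd h (by assumption) | exact absurd h' (by tauto) | exact absurd h'.symm (by tauto)
            have a2y : G.Adj c2 y := by
              rcases key c1 y c2 y q1 hy q2 hy e1y e2y a1y with ⟨h, h'⟩ | ⟨h, h'⟩ | h <;>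
                first | exact h | exact absurd h (by assumption) | exact absurd h' (by tauto)
            have a3x : G.Adj c3 x := by
              rcases key c1 y c3 x q1 hy q3 hx e1y e3x a1y with ⟨h, h'⟩ | ⟨h, h'⟩ | h <;>
                first | exact h | exact absurd h (by assumption) | exact absurd h' (by tauto) | exact absurd h'.symm (by tauto)
            have a3y : G.Adj c3 y := by
              rcases key c1 y c3 y q1 hy q3 hy e1y e3y a1y with ⟨h, h'⟩ | ⟨h, h'⟩ | h <;>
                first | exact h | exact absurd h (by assumption) | exact absurd h' (by tauto)
            exact ⟨c2, c3, q2, q3, h23, e2x, e2y, e3x, e3y, g23, a2x, a2y, a3x, a3y⟩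
        · -- c1-x bad; use (c2,c3)
          have a2x : G.Adj c2 x := by
            rcases key c1 x c2 x q1 hx q2 hx e1x e2x a1x with ⟨h, h'⟩ | ⟨h, h'⟩ | h <;>
              first | exact h | exact absurd h (by assumption) | exact absurd h' (by tauto)
          have a2y : G.Adj c2 y := by
            rcases key c1 x c2 y q1 hx q2 hy e1x e2y a1x with ⟨h, h'⟩ | ⟨h, h'⟩ | h <;>
              first | exact h | exact absurd h (by assumption) | exact absurd h' (by tauto) | exact absurd h'.symm (by tauto)
          have a3x : G.Adj c3 x := by
            rcases key c1 x c3 x q1 hx q3 hx e1x e3x a1x with ⟨h, h'⟩ | ⟨h, h'⟩ | h <;>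
              first | exact h | exact absurd h (by assumption) | exact absurd h' (by tauto)
          have a3y : G.Adj c3 y := by
            rcases key c1 x c3 y q1 hx q3 hy e1x e3y a1x with ⟨h, h'⟩ | ⟨h, h'⟩ | h <;>
              first | exact h | exact absurd h (by assumption) | exact absurd h' (by tauto) | exact absurd h'.symm (by tauto)
          exact ⟨c2, c3, q2, q3, h23, e2x, e2y, e3x, e3y, g23, a2x, a2y, a3x, a3y⟩
      · -- c2-c3 bad; use (c1,c2)
        have a1x : G.Adj c1 x := by
          rcases key c2 c3 c1 x q2 q3 q1 hx h23 e1x g23 with ⟨h, h'⟩ | ⟨h, h'⟩ | h <;>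
            first | exact h | exact absurd h (by tauto) | exact absurd h.symm (by tauto) | exact absurd h' (by tauto) | exact absurd h'.symm (by tauto)
        have a1y : G.Adj c1 y := by
          rcases key c2 c3 c1 y q2 q3 q1 hy h23 e1y g23 with ⟨h, h'⟩ | ⟨h, h'⟩ | h <;>
            first | exact h | exact absurd h (by tauto) | exact absurd h.symm (by tauto) | exact absurd h' (by tauto) | exact absurd h'.symm (by tauto)
        have a2x : G.Adj c2 x := by
          rcases key c2 c3 c2 x q2 q3 q2 hx h23 e2x g23 with ⟨h, h'⟩ | ⟨h, h'⟩ | h <;>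
            first | exact h | exact absurd h (by tauto) | exact absurd h.symm (by tauto) | exact absurd h' (by tauto) | exact absurd h'.symm (by tauto)
        have a2y : G.Adj c2 y := by
          rcases key c2 c3 c2 y q2 q3 q2 hy h23 e2y g23 with ⟨h, h'⟩ | ⟨h, h'⟩ | h <;>
            first | exact h | exact absurd h (by tauto) | exact absurd h.symm (by tauto) | exact absurd h' (by tauto) | exact absurd h'.symm (by tauto)
        exact ⟨c1, c2, q1, q2, h12, e1x, e1y, e2x, e2y, g12, a1x, a1y, a2x, a2y⟩
    · -- c1-c3 bad; use (c1,c2)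
      have a1x : G.Adj c1 x := by
        rcases key c1 c3 c1 x q1 q3 q1 hx h13 e1x g13 with ⟨h, h'⟩ | ⟨h, h'⟩ | h <;>
          first | exact h | exact absurd h (by tauto) | exact absurd h.symm (by tauto) | exact absurd h' (by tauto) | exact absurd h'.symm (by tauto)
      have a1y : G.Adj c1 y := by
        rcases key c1 c3 c1 y q1 q3 q1 hy h13 e1y g13 with ⟨h, h'⟩ | ⟨h, h'⟩ | h <;>
          first | exact h | exact absurd h (by tauto) | exact absurd h.symm (by tauto) | exact absurd h' (by tauto) | exact absurd h'.symm (by tauto)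
      have a2x : G.Adj c2 x := by
        rcases key c1 c3 c2 x q1 q3 q2 hx h13 e2x g13 with ⟨h, h'⟩ | ⟨h, h'⟩ | h <;>
          first | exact h | exact absurd h (by tauto) | exact absurd h.symm (by tauto) | exact absurd h' (by tauto) | exact absurd h'.symm (by tauto)
      have a2y : G.Adj c2 y := by
        rcases key c1 c3 c2 y q1 q3 q2 hy h13 e2y g13 with ⟨h, h'⟩ | ⟨h, h'⟩ | h <;>
          first | exact h | exact absurd h (by tauto) | exact absurd h.symm (by tauto) | exact absurd h' (by tauto) | exact absurd h'.symm (by tauto)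
      exact ⟨c1, c2, q1, q2, h12, e1x, e1y, e2x, e2y, g12, a1x, a1y, a2x, a2y⟩
  · -- c1-c2 bad; use (c1,c3)? need g13 etc: derive all from key vs (c1,c2)
    have g13 : G.Adj c1 c3 := by
      rcases key c1 c2 c1 c3 q1 q2 q1 q3 h12 h13 g12 with ⟨h, h'⟩ | ⟨h, h'⟩ | h <;>
        first | exact h | exact absurd h (by tauto) | exact absurd h.symm (by tauto) | exact absurd h' (by tauto) | exact absurd h'.symm (by tauto)
    have a1x : G.Adj c1 x := by
      rcases key c1 c2 c1 x q1 q2 q1 hx h12 e1x g12 with ⟨h, h'⟩ | ⟨h, h'⟩ | h <;>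
        first | exact h | exact absurd h (by tauto) | exact absurd h.symm (by tauto) | exact absurd h' (by tauto) | exact absurd h'.symm (by tauto)
    have a1y : G.Adj c1 y := by
      rcases key c1 c2 c1 y q1 q2 q1 hy h12 e1y g12 with ⟨h, h'⟩ | ⟨h, h'⟩ | h <;>
        first | exact h | exact absurd h (by tauto) | exact absurd h.symm (by tauto) | exact absurd h' (by tauto) | exact absurd h'.symm (by tauto)
    have a3x : G.Adj c3 x := by
      rcases key c1 c2 c3 x q1 q2 q3 hx h12 e3x g12 with ⟨h, h'⟩ | ⟨h, h'⟩ | h <;>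
        first | exact h | exact absurd h (by tauto) | exact absurd h.symm (by tauto) | exact absurd h' (by tauto) | exact absurd h'.symm (by tauto)
    have a3y : G.Adj c3 y := by
      rcases key c1 c2 c3 y q1 q2 q3 hy h12 e3y g12 with ⟨h, h'⟩ | ⟨h, h'⟩ | h <;>
        first | exact h | exact absurd h (by tauto) | exact absurd h.symm (by tauto) | exact absurd h' (by tauto) | exact absurd h'.symm (by tauto)
    exact ⟨c1, c3, q1, q3, h13, e1x, e1y, e3x, e3y, g13, a1x, a1y, a3x, a3y⟩

lemma cmpMemF {F : Set V} {P : Set (Set V)} (hP : IsCMP G F P) {A : Set V} (hA : A ∈ P)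
    {a : V} (ha : a ∈ A) : a ∈ F := (hP.1 A hA).2 ha

lemma cmpAdj {F : Set V} {P : Set (Set V)} (hP : IsCMP G F P) {A B : Set V}
    (hA : A ∈ P) (hB : B ∈ P) (hAB : A ≠ B) {a b : V} (ha : a ∈ A) (hb : b ∈ B) :
    G.Adj a b := by
  have haF := cmpMemF hP hA ha
  have hbF := cmpMemF hP hB hb
  rw [hP.2.2.2 a haF b hbF]
  rintro ⟨C0, hC0, haC0, hbC0⟩
  have hAC : A = C0 := by
    by_contra hne
    exact Set.disjoint_left.mp (hP.2.2.1 A hA C0 hC0 hne) ha haC0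
  have hBC : B = C0 := by
    by_contra hne
    exact Set.disjoint_left.mp (hP.2.2.1 B hB C0 hC0 hne) hb hbC0
  exact hAB (hAC.trans hBC.symm)

lemma cmpNotAdj {F : Set V} {P : Set (Set V)} (hP : IsCMP G F P) {A : Set V} (hA : A ∈ P)
    {a b : V} (ha : a ∈ A) (hb : b ∈ A) : ¬G.Adj a b := fun h =>
  (hP.2.2.2 a (cmpMemF hP hA ha) b (cmpMemF hP hA hb)).mp h ⟨A, hA, ha, hb⟩

lemma cmpClass {F : Set V} {P : Set (Set V)} (hP : IsCMP G F P) {u : V} (hu : u ∈ F) :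
    ∃ A ∈ P, u ∈ A := by
  have h := hP.2.1
  rw [← h] at hu
  simpa using hu

lemma lmain [Fintype V] {F : Set V} {P : Set (Set V)}
    (h1 : H1 G S) (h2 : H2 G S) (hFS : F ⊆ Sᶜ) (hP : IsCMP G F P)
    {M B T : Set V} (hM : M ∈ P) (hB : B ∈ P) (hT : T ∈ P)
    (hMB : M ≠ B) (hMT : M ≠ T) (hBT : B ≠ T)
    {s p p' q t : V} (hs : s ∈ S)
    (hpM : p ∈ M) (hp'M : p' ∈ M) (hqB : q ∈ B) (htT : t ∈ T)
    (hpp' : p ≠ p')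
    (hsp : G.Adj s p) (hsq : G.Adj s q) (hnp' : ¬G.Adj s p') (hnt : ¬G.Adj s t) :
    False := by
  classical
  have notS : ∀ {u : V}, u ∈ F → u ∉ S := fun hu hu' => hFS hu hu'
  have hpF : p ∈ F := cmpMemF hP hM hpM
  have hp'F : p' ∈ F := cmpMemF hP hM hp'M
  have hqF : q ∈ F := cmpMemF hP hB hqB
  have htF : t ∈ F := cmpMemF hP hT htT
  have hpq : G.Adj p q := cmpAdj hP hM hB hMB hpM hqB
  obtain ⟨Q, hQ, hpQ, hqQ⟩ := h1 p q hpq (fun hps => notS hpF hps.1)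
  obtain ⟨a, b, haQ, hbQ, hab, hap', haq', hbp', hbq', gab, gap, gaq, gbp, gbq⟩ :=
    exists_good_pair hQ hpQ hqQ hpq.ne
  have hvex : ∃ v, v ≠ t ∧ G.Adj v p ∧ G.Adj v q ∧ G.Adj v t := by
    by_cases hta : t = a
    · refine ⟨b, ?_, gbp, gbq, ?_⟩
      · rw [hta]; exact fun h => hab h.symm
      · rw [hta]; exact gab.symm
    by_cases htb : t = b
    · refine ⟨a, ?_, gap, gaq, ?_⟩
      · rw [htb]; exact hab
      · rw [htb]; exact gab
    by_cases hat : G.Adj a t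
    · exact ⟨a, hat.ne, gap, gaq, hat⟩
    by_cases hbt : G.Adj b t
    · exact ⟨b, hbt.ne, gbp, gbq, hbt⟩
    -- prison {p, q, a, b, t}
    exact absurd (prison_contra h2 hpq gap.symm gbp.symm gaq.symm gbq.symm gab
      (cmpAdj hP hT hM hMT.symm htT hpM) (cmpAdj hP hT hB hBT.symm htT hqB)
      (fun h => hat h.symm) (fun h => hbt h.symm) hta htb
      (a := a) (b := b)
      (fun hh => absurd hh (notS hpF)) (fun hh => absurd hh (notS hqF))
      (fun _ => Or.inl rfl) (fun _ => Or.inr rfl)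
      (fun hh => absurd hh (notS htF))) (fun h => h)
  obtain ⟨v, hvt', hvp, hvq, hvt⟩ := hvex
  have hvp' : v ≠ p' := fun h => (cmpNotAdj hP hM hp'M hpM) (by rw [← h]; exact hvp)
  by_cases hvadj : G.Adj v p'
  · by_cases hvs : G.Adj v s
    · -- prison {v, q, p, s, p'}
      exact prison_contra h2 hvq hvp hvs
        (cmpAdj hP hB hM hMB.symm hqB hpM) hsq.symm hsp.symm
        hvadj.symm (cmpAdj hP hM hB hMB hp'M hqB)
        (cmpNotAdj hP hM hp'M hpM) (fun h => hnp' h.symm)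
        hpp'.symm (fun h => notS hp'F (h ▸ hs))
        (a := s) (b := v)
        (fun _ => Or.inr rfl) (fun hh => absurd hh (notS hqF))
        (fun hh => absurd hh (notS hpF)) (fun _ => Or.inl rfl)
        (fun hh => absurd hh (notS hp'F))
    · -- prison {p, q, t, v, s}
      exact prison_contra h2 hpq (cmpAdj hP hM hT hMT hpM htT) hvp.symm
        (cmpAdj hP hB hT hBT hqB htT) hvq.symm hvt.symm
        hsp hsq hnt (fun h => hvs h.symm)
        (fun h => notS htF (h ▸ hs)) (fun h => hnt (by rw [h]; exact hvt))
        (a := s) (b := v)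
        (fun hh => absurd hh (notS hpF)) (fun hh => absurd hh (notS hqF))
        (fun hh => absurd hh (notS htF)) (fun _ => Or.inr rfl)
        (fun _ => Or.inl rfl)
  · -- prison {q, t, p, v, p'}
    exact prison_contra h2 (cmpAdj hP hB hT hBT hqB htT)
      (cmpAdj hP hB hM hMB.symm hqB hpM) hvq.symm
      (cmpAdj hP hT hM hMT.symm htT hpM) hvt.symm hvp.symm
      (cmpAdj hP hM hB hMB hp'M hqB) (cmpAdj hP hM hT hMT hp'M htT)
      (cmpNotAdj hP hM hp'M hpM) (fun h => hvadj h.symm)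
      hpp'.symm hvp'.symm
      (a := v) (b := v)
      (fun hh => absurd hh (notS hqF)) (fun hh => absurd hh (notS htF))
      (fun hh => absurd hh (notS hpF)) (fun _ => Or.inl rfl)
      (fun hh => absurd hh (notS hp'F))

end Helpers

/-- Under (H1) and (H2), for `F ∈ cmd₃(G−S)` and `s ∈ S`: if
`N(s)` intersects more than one class of `F`, then `N(s) ∩ F = F ∖ C` for a single
class `C` of `F`, or `N(s) ∩ F = F`. -/
theorem consistentFs3 {V : Type*} [Fintype V] (G : SimpleGraph V)
    (S : Set V) (h1 : H1 G S) (h2 : H2 G S)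
    (F : Set V) (hF : Cmd G Sᶜ 3 F) (s : V) (hs : s ∈ S) :
    ∀ P : Set (Set V), IsCMP G F P →
      (∃ C ∈ P, ∃ D ∈ P, C ≠ D ∧ (∃ x ∈ C, G.Adj s x) ∧ (∃ y ∈ D, G.Adj s y)) →
      (∃ C ∈ P, {x ∈ F | G.Adj s x} = F \ C) ∨ (∀ x ∈ F, G.Adj s x) := by
  classical
  intro P hP hmeet
  obtain ⟨C, hC, D, hD, hCD, ⟨x, hxC, hsx⟩, ⟨y, hyD, hsy⟩⟩ := hmeet
  obtain ⟨hFS, hcmp3, hmax⟩ := hF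
  have notS : ∀ {u : V}, u ∈ F → u ∉ S := fun hu hu' => hFS hu hu'
  have memF : ∀ {A : Set V}, A ∈ P → ∀ {u : V}, u ∈ A → u ∈ F :=
    fun {A} hA {u} hu => (hP.1 A hA).2 hu
  -- there is always a third class
  have three : ∀ M B' : Set V, ∃ T ∈ P, T ≠ M ∧ T ≠ B' := by
    obtain ⟨P', hP', f, hf⟩ := hcmp3
    have rep : ∀ i : Fin 3, ∃ u, u ∈ f i := fun i => (hP'.1 _ (hf i)).1
    choose u hu using rep
    have huF : ∀ i, u i ∈ F := fun i => (hP'.1 _ (hf i)).2 (hu i)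
    have cls : ∀ i, ∃ A ∈ P, u i ∈ A := fun i => cmpClass hP (huF i)
    choose A hA hua using cls
    have hdist : ∀ i j : Fin 3, i ≠ j → A i ≠ A j := by
      intro i j hij h
      have hne : f i ≠ f j := fun e => hij (f.injective e)
      have hadj : G.Adj (u i) (u j) := cmpAdj hP' (hf i) (hf j) hne (hu i) (hu j)
      exact cmpNotAdj hP (hA i) (hua i) (h ▸ hua j) hadj
    intro M B'
    by_cases e0 : A 0 = M ∨ A 0 = B'
    · by_cases e1 : A 1 = M ∨ A 1 = B'
      · rcases e0 with h0' | h0' <;> rcases e1 with h1' | h1'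
        · exact absurd (h0'.trans h1'.symm) (hdist 0 1 (by decide))
        · exact ⟨A 2, hA 2, fun hm => (hdist 2 0 (by decide)) (hm.trans h0'.symm),
            fun hb => (hdist 2 1 (by decide)) (hb.trans h1'.symm)⟩
        · exact ⟨A 2, hA 2, fun hm => (hdist 2 1 (by decide)) (hm.trans h1'.symm),
            fun hb => (hdist 2 0 (by decide)) (hb.trans h0'.symm)⟩
        · exact absurd (h0'.trans h1'.symm) (hdist 0 1 (by decide))
      · push_neg at e1
        exact ⟨A 1, hA 1, e1.1, e1.2⟩
    · push_neg at e0
      exact ⟨A 0, hA 0, e0.1, e0.2⟩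
  -- no class meets both the neighbourhood and the non-neighbourhood of s
  have noMixed : ∀ M ∈ P, ∀ p ∈ M, ∀ p' ∈ M, G.Adj s p → ¬G.Adj s p' → False := by
    intro M hM p hpM p' hp'M hsp hnp'
    have hpp' : p ≠ p' := fun h => hnp' (h ▸ hsp)
    obtain ⟨B', hB', hB'M, q, hqB', hsq⟩ : ∃ B' ∈ P, B' ≠ M ∧ ∃ q ∈ B', G.Adj s q := by
      by_cases hMC : M = C
      · exact ⟨D, hD, fun h => hCD (h.trans hMC).symm, y, hyD, hsy⟩
      · exact ⟨C, hC, fun h => hMC h.symm, x, hxC, hsx⟩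
    obtain ⟨T, hT, hTM, hTB'⟩ := three M B'
    obtain ⟨t, htT⟩ := (hP.1 T hT).1
    by_cases hst : G.Adj s t
    · -- prison {q, t, p, s, p'}
      exact prison_contra h2 (cmpAdj hP hB' hT hTB'.symm hqB' htT)
        (cmpAdj hP hB' hM hB'M hqB' hpM) hsq.symm
        (cmpAdj hP hT hM hTM htT hpM) hst.symm hsp.symm
        (cmpAdj hP hM hB' hB'M.symm hp'M hqB') (cmpAdj hP hM hT hTM.symm hp'M htT)
        (cmpNotAdj hP hM hp'M hpM) (fun h => hnp' h.symm)
        hpp'.symm (fun h => notS (memF hM hp'M) (h ▸ hs))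
        (a := s) (b := s)
        (fun hh => absurd hh (notS (memF hB' hqB'))) (fun hh => absurd hh (notS (memF hT htT)))
        (fun hh => absurd hh (notS (memF hM hpM))) (fun _ => Or.inl rfl)
        (fun hh => absurd hh (notS (memF hM hp'M)))
    · exact lmain h1 h2 hFS hP hM hB' hT hB'M.symm hTM.symm hTB'.symm hs
        hpM hp'M hqB' htT hpp' hsp hsq hnp' hst
  -- no two classes both miss s
  have noTwo : ∀ A ∈ P, ∀ E ∈ P, A ≠ E → ∀ u ∈ A, ∀ w ∈ E,
      ¬G.Adj s u → ¬G.Adj s w → False := by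
    intro A hA E hE hAE u huA w hwE hnu hnw
    by_cases hCA : C = A
    · exact noMixed A hA x (hCA ▸ hxC) u huA hsx hnu
    by_cases hCE : C = E
    · exact noMixed E hE x (hCE ▸ hxC) w hwE hsx hnw
    by_cases hDA : D = A
    · exact noMixed A hA y (hDA ▸ hyD) u huA hsy hnu
    by_cases hDE : D = E
    · exact noMixed E hE y (hDE ▸ hyD) w hwE hsy hnw
    -- prison {x, y, u, w, s}
    exact prison_contra h2 (cmpAdj hP hC hD hCD hxC hyD)
      (cmpAdj hP hC hA hCA hxC huA) (cmpAdj hP hC hE hCE hxC hwE)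
      (cmpAdj hP hD hA hDA hyD huA) (cmpAdj hP hD hE hDE hyD hwE)
      (cmpAdj hP hA hE hAE huA hwE)
      hsx hsy hnu hnw
      (fun h => notS (memF hA huA) (h ▸ hs)) (fun h => notS (memF hE hwE) (h ▸ hs))
      (a := s) (b := s)
      (fun hh => absurd hh (notS (memF hC hxC))) (fun hh => absurd hh (notS (memF hD hyD)))
      (fun hh => absurd hh (notS (memF hA huA))) (fun hh => absurd hh (notS (memF hE hwE)))
      (fun _ => Or.inl rfl)
  by_cases hall : ∀ u ∈ F, G.Adj s u
  · exact Or.inr hall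
  push_neg at hall
  obtain ⟨w, hwF, hnw⟩ := hall
  obtain ⟨E, hE, hwE⟩ := cmpClass hP hwF
  refine Or.inl ⟨E, hE, ?_⟩
  ext u
  simp only [Set.mem_setOf_eq, Set.mem_diff]
  constructor
  · rintro ⟨huF, hadj⟩
    exact ⟨huF, fun huE => noMixed E hE u huE w hwE hadj hnw⟩
  · rintro ⟨huF, huE⟩
    refine ⟨huF, ?_⟩
    obtain ⟨A, hA, huA⟩ := cmpClass hP huF
    by_contra hnu
    exact noTwo A hA E hE (fun h => huE (h ▸ huA)) u huA w hwE hnu hnw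

end PrisonFreePaper
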